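/- For every real y, f_{63}(y) = -(1/3) sin y + (2/3) cosh(\sqrt{3} y / 2) sin(y/2). -/

import Mathlib

noncomputable def f6 (k : ℕ) (y : ℝ) : ℝ :=
  ∑' p : ℕ, (-1 : ℝ) ^ p * y ^ (k + 6 * p) / ((k + 6 * p).factorial : ℝ)


open Complex

noncomputable def zz1 : ℂ := (Real.sqrt 3 + Complex.I) / 2
noncomputable def zz2 : ℂ := (-Real.sqrt 3 + Complex.I) / 2

lemma hs3 : ((Real.sqrt 3 : ℝ) : ℂ) ^ 2 = 3 := by
  norm_cast
  exact Real.sq_sqrt (by norm_num)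

lemma zz1_cube : zz1 ^ 3 = Complex.I := by
  unfold zz1
  linear_combination (((Real.sqrt 3:ℝ):ℂ) + 3 * Complex.I) / 8 * hs3 +
    (3*((Real.sqrt 3:ℝ):ℂ)/8 + Complex.I/8) * Complex.I_sq

lemma zz2_cube : zz2 ^ 3 = Complex.I := by
  unfold zz2
  linear_combination ((-((Real.sqrt 3:ℝ):ℂ)) + 3 * Complex.I) / 8 * hs3 +
    (-3*((Real.sqrt 3:ℝ):ℂ)/8 + Complex.I/8) * Complex.I_sq

lemma zz1_six : zz1 ^ 6 = -1 := by
  rw [show (6:ℕ) = 3*2 by rfl, pow_mul, zz1_cube, Complex.I_sq]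

lemma zz2_six : zz2 ^ 6 = -1 := by
  rw [show (6:ℕ) = 3*2 by rfl, pow_mul, zz2_cube, Complex.I_sq]

lemma zz_sum : zz1 + zz2 = Complex.I := by unfold zz1 zz2; ring

lemma zz_sq_sum : zz1 ^ 2 + zz2 ^ 2 = 1 := by
  unfold zz1 zz2
  linear_combination (1/2) * hs3 + (1/2) * Complex.I_sq

lemma hI3 : Complex.I ^ 3 = -Complex.I := by
  rw [pow_succ, Complex.I_sq]; ring

lemma hI6 : Complex.I ^ 6 = -1 := by
  rw [show (6:ℕ) = 2*3 from rfl, pow_mul, Complex.I_sq]; ring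

lemma real_part (r : ℕ) (hr : r < 6) (hr3 : r ≠ 3) :
    ∃ c : ℝ, zz1 ^ r + zz2 ^ r - Complex.I ^ r = (c : ℂ) := by
  interval_cases r
  · exact ⟨1, by norm_num⟩
  · refine ⟨0, ?_⟩
    simp only [pow_one]
    push_cast
    linear_combination zz_sum
  · refine ⟨2, ?_⟩
    rw [zz_sq_sum, Complex.I_sq]; norm_num
  · exact absurd rfl hr3
  · refine ⟨-2, ?_⟩
    rw [show (4:ℕ) = 3+1 from rfl, pow_add, pow_add, pow_add, zz1_cube, zz2_cube, hI3]
    push_cast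
    linear_combination Complex.I * zz_sum + 2 * Complex.I_sq
  · refine ⟨0, ?_⟩
    rw [show (5:ℕ) = 3+2 from rfl, pow_add, pow_add, pow_add, zz1_cube, zz2_cube, hI3]
    push_cast
    linear_combination Complex.I * zz_sq_sum + Complex.I * Complex.I_sq

noncomputable def G (y : ℝ) (n : ℕ) : ℝ :=
  ((zz1 * (y:ℂ)) ^ n / (n.factorial : ℂ) + (zz2 * (y:ℂ)) ^ n / (n.factorial : ℂ)
    - (Complex.I * (y:ℂ)) ^ n / (n.factorial : ℂ)).im / 3

lemma G_zero (y : ℝ) (n : ℕ) (hn : n % 6 ≠ 3) : G y n = 0 := by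
  obtain ⟨q, r, hr, rfl⟩ : ∃ q r, r < 6 ∧ n = 6 * q + r :=
    ⟨n / 6, n % 6, Nat.mod_lt _ (by norm_num), by omega⟩
  obtain ⟨c, hc⟩ := real_part r hr (by omega)
  have e1 : zz1 ^ (6*q+r) = (-1) ^ q * zz1 ^ r := by rw [pow_add, pow_mul, zz1_six]
  have e2 : zz2 ^ (6*q+r) = (-1) ^ q * zz2 ^ r := by rw [pow_add, pow_mul, zz2_six]
  have e3 : Complex.I ^ (6*q+r) = (-1) ^ q * Complex.I ^ r := by rw [pow_add, pow_mul, hI6]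
  have harg : (zz1 * (y:ℂ)) ^ (6*q+r) / ((6*q+r).factorial : ℂ)
      + (zz2 * (y:ℂ)) ^ (6*q+r) / ((6*q+r).factorial : ℂ)
      - (Complex.I * (y:ℂ)) ^ (6*q+r) / ((6*q+r).factorial : ℂ)
      = (((-1:ℝ) ^ q * c * y ^ (6*q+r) / ((6*q+r).factorial : ℝ) : ℝ) : ℂ) := by
    rw [mul_pow, mul_pow, mul_pow, e1, e2, e3]
    push_cast
    linear_combination ((-1:ℂ)) ^ q * ((y:ℂ)) ^ (6*q+r) / (((6*q+r).factorial : ℕ) : ℂ) * hc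
  unfold G
  rw [harg, Complex.ofReal_im]
  norm_num

lemma G_pos (y : ℝ) (p : ℕ) :
    G y (3 + 6*p) = (-1:ℝ) ^ p * y ^ (3 + 6*p) / ((3 + 6*p).factorial : ℝ) := by
  have e1 : zz1 ^ (3+6*p) = Complex.I * (-1) ^ p := by rw [pow_add, pow_mul, zz1_cube, zz1_six]
  have e2 : zz2 ^ (3+6*p) = Complex.I * (-1) ^ p := by rw [pow_add, pow_mul, zz2_cube, zz2_six]
  have e3 : Complex.I ^ (3+6*p) = -Complex.I * (-1) ^ p := by rw [pow_add, pow_mul, hI3, hI6]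
  have harg : (zz1 * (y:ℂ)) ^ (3+6*p) / ((3+6*p).factorial : ℂ)
      + (zz2 * (y:ℂ)) ^ (3+6*p) / ((3+6*p).factorial : ℂ)
      - (Complex.I * (y:ℂ)) ^ (3+6*p) / ((3+6*p).factorial : ℂ)
      = ((3 * (-1:ℝ) ^ p * y ^ (3+6*p) / ((3+6*p).factorial : ℝ) : ℝ) : ℂ) * Complex.I := by
    rw [mul_pow, mul_pow, mul_pow, e1, e2, e3]
    push_cast
    ring
  unfold G
  rw [harg, Complex.mul_I_im, Complex.ofReal_re]
  ring

theorem f63_main (y : ℝ) :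
    HasSum (fun p : ℕ => (-1:ℝ) ^ p * y ^ (3 + 6*p) / ((3 + 6*p).factorial : ℝ))
      (((Complex.exp (zz1 * (y:ℂ)) + Complex.exp (zz2 * (y:ℂ))
        - Complex.exp (Complex.I * (y:ℂ))).im) / 3) := by
  have h1 := NormedSpace.expSeries_div_hasSum_exp (zz1 * (y:ℂ))
  have h2 := NormedSpace.expSeries_div_hasSum_exp (zz2 * (y:ℂ))
  have h3 := NormedSpace.expSeries_div_hasSum_exp (Complex.I * (y:ℂ))
  have h := (((h1.add h2).sub h3).mapL Complex.imCLM).div_const 3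
  simp only [Complex.imCLM_apply] at h
  rw [Complex.exp_eq_exp_ℂ]
  have hg : Function.Injective (fun p : ℕ => 3 + 6 * p) := by intro a b hab; dsimp only at hab; omega
  have hzero : ∀ n ∉ Set.range (fun p : ℕ => 3 + 6 * p), G y n = 0 := by
    intro n hn
    exact G_zero y n (fun hmod => hn ⟨n / 6, by dsimp only; omega⟩)
  have hcomp := (hg.hasSum_iff hzero).mpr h
  exact hcomp.congr_fun fun p => (G_pos y p).symm

theorem f63_eq (y : ℝ) :
    f6 3 y = -(1 / 3) * Real.sin y
      + (2 / 3) * Real.cosh (Real.sqrt 3 * y / 2) * Real.sin (y / 2) := by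
  have h := f63_main y
  unfold f6
  rw [h.tsum_eq]
  have ea : zz1 * (y:ℂ) = ((Real.sqrt 3 * y / 2 : ℝ):ℂ) + ((y/2 : ℝ):ℂ) * Complex.I := by
    unfold zz1; push_cast; ring
  have eb : zz2 * (y:ℂ) = ((-(Real.sqrt 3 * y / 2) : ℝ):ℂ) + ((y/2 : ℝ):ℂ) * Complex.I := by
    unfold zz2; push_cast; ring
  have ec : Complex.I * (y:ℂ) = ((0:ℝ):ℂ) + ((y:ℝ):ℂ) * Complex.I := by push_cast; ring
  rw [ea, eb, ec]
  simp [Complex.exp_im]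
  rw [Real.cosh_eq]
  ring
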